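/- For any tree T with at least one edge, the set of leaves of T is the unique minimum monitoring edge-geodetic set of T; in particular MEG(T) equals the number of leaves of T. -/

import Mathlib

open SimpleGraph

/-- Two vertices `x` and `y` monitor an edge `e` in `G`: there is a shortest path between
them, and `e` lies on every shortest path between `x` and `y`. -/
def Monitors {V : Type*} (G : SimpleGraph V) (x y : V) (e : Sym2 V) : Prop :=
  (∃ p : G.Walk x y, p.IsPath ∧ p.length = G.dist x y) ∧
    ∀ p : G.Walk x y, p.IsPath → p.length = G.dist x y → e ∈ p.edges

/-- `S` is a monitoring edge-geodetic set of `G`. -/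
def IsMEGSet {V : Type*} (G : SimpleGraph V) (S : Set V) : Prop :=
  ∀ e ∈ G.edgeSet, ∃ x ∈ S, ∃ y ∈ S, Monitors G x y e

/-- The minimum size of a monitoring edge-geodetic set of `G`. -/
noncomputable def megNum {V : Type*} (G : SimpleGraph V) : ℕ :=
  sInf {n | ∃ S : Set V, IsMEGSet G S ∧ S.ncard = n}

/-- The set of leaves (degree-1 vertices) of `G`. -/
def leaves {V : Type*} (G : SimpleGraph V) : Set V :=
  {v | (G.neighborSet v).ncard = 1}

namespace MEGAux

variable {V : Type*} {G : SimpleGraph V}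

lemma path_unique (hT : G.IsTree) {x y : V} {p q : G.Walk x y} (hp : p.IsPath) (hq : q.IsPath) :
    p = q := by
  obtain ⟨r, -, hr⟩ := hT.existsUnique_path x y
  rw [hr p hp, hr q hq]

lemma path_length_eq_dist (hT : G.IsTree) {x y : V} {p : G.Walk x y} (hp : p.IsPath) :
    p.length = G.dist x y := by
  obtain ⟨q, hq, hql⟩ := hT.isConnected.exists_path_of_dist x y
  rw [path_unique hT hp hq, hql]

lemma monitors_of (hT : G.IsTree) {x y : V} {e : Sym2 V} (p : G.Walk x y) (hp : p.IsPath)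
    (he : e ∈ p.edges) : Monitors G x y e :=
  ⟨⟨p, hp, path_length_eq_dist hT hp⟩, fun q hq _ => by
    rw [path_unique hT hq hp]; exact he⟩

lemma append_isPath {u v w : V} {p : G.Walk u v} {q : G.Walk v w} (hp : p.IsPath)
    (hq : q.IsPath) (h : ∀ z ∈ p.support, z ∈ q.support → z = v) :
    (p.append q).IsPath := by
  rw [SimpleGraph.Walk.isPath_def] at hp hq ⊢
  rw [SimpleGraph.Walk.support_append]
  refine List.Nodup.append hp (hq.sublist (List.tail_sublist _)) ?_
  intro z hz1 hz2
  have hz2' : z ∈ q.support := List.mem_of_mem_tail hz2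
  have hzv : z = v := h z hz1 hz2'
  subst hzv
  have : q.support = z :: q.support.tail := q.support_eq_cons
  rw [this] at hq
  exact (List.nodup_cons.mp hq).1 hz2

lemma exists_other_nbr [Fintype V] {x b : V} (hb : G.Adj x b) (hx : x ∉ leaves G) :
    ∃ w, G.Adj x w ∧ w ≠ b := by
  by_contra h
  push_neg at h
  apply hx
  have hset : G.neighborSet x = {b} := by
    ext w
    simp only [mem_neighborSet, Set.mem_singleton_iff]
    exact ⟨fun hw => h w hw, fun hw => hw ▸ hb⟩
  simp [leaves, hset]

lemma exists_leaf_path [Fintype V] (hT : G.IsTree) {u v : V} (huv : G.Adj u v) :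
    ∃ x ∈ leaves G, ∃ p : G.Walk x u, p.IsPath ∧ v ∉ p.support := by
  classical
  suffices h : ∀ n (x : V) (p : G.Walk x u), p.IsPath → v ∉ p.support →
      Fintype.card V - p.length ≤ n →
      ∃ x ∈ leaves G, ∃ p : G.Walk x u, p.IsPath ∧ v ∉ p.support by
    refine h (Fintype.card V) u Walk.nil (by simp) (by simp [huv.ne']) le_rfl
  intro n
  induction n with
  | zero =>
    intro x p hp hv hn
    have := hp.length_lt
    omega
  | succ n ih =>
    intro x p hp hv hn
    by_cases hx : x ∈ leaves G
    · exact ⟨x, hx, p, hp, hv⟩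
    cases p with
    | nil =>
      -- here x = u
      obtain ⟨w, hw, hwv⟩ := exists_other_nbr huv hx
      have hp' : (Walk.cons hw.symm Walk.nil : G.Walk w u).IsPath := by
        simp [hw.ne']
      refine ih w (Walk.cons hw.symm Walk.nil) hp' ?_ ?_
      · simp only [Walk.support_cons, Walk.support_nil, List.mem_cons, List.mem_singleton]
        rintro (rfl | rfl | h)
        · exact hwv rfl
        · exact huv.ne' rfl
        · simp at h
      · have hlt : (Walk.cons hw.symm (Walk.nil : G.Walk u u)).length < Fintype.card V :=
          hp'.length_lt
        simp only [Walk.length_cons, Walk.length_nil] at hlt ⊢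
        simp only [Walk.length_nil] at hn
        omega
    | cons h q =>
      rename_i b
      have hq : q.IsPath := (Walk.cons_isPath_iff h q).mp hp |>.1
      have hxq : x ∉ q.support := ((Walk.cons_isPath_iff h q).mp hp).2
      obtain ⟨w, hw, hwb⟩ := exists_other_nbr h hx
      have hxv : x ≠ v := fun hxv => hv (hxv ▸ (Walk.cons h q).start_mem_support)
      -- w ≠ v
      have hwv : w ≠ v := by
        rintro rfl
        -- two distinct paths from x to w
        have hA : (Walk.cons hw Walk.nil : G.Walk x w).IsPath := by simp [hxv]
        have hB : ((Walk.cons h q).append (Walk.cons huv Walk.nil)).IsPath := by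
          refine append_isPath hp (by simp [huv.ne]) ?_
          intro z hz1 hz2
          simp only [Walk.support_cons, Walk.support_nil, List.mem_cons,
            List.mem_singleton] at hz2
          rcases hz2 with rfl | rfl | hz2
          · rfl
          · exact absurd hz1 hv
          · simp at hz2
        have heq := path_unique hT hA hB
        have := congrArg Walk.length heq
        simp [Walk.length_append] at this
      -- w ∉ support of (cons h q)
      have hws : w ∉ (Walk.cons h q).support := by
        intro hws
        have hwx : x ≠ w := hw.ne
        have hA : (Walk.cons hw Walk.nil : G.Walk x w).IsPath := by simp [hwx]
        have hB : ((Walk.cons h q).takeUntil w hws).IsPath := hp.takeUntil hws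
        have heq := path_unique hT hB hA
        have hedge : s(x, w) ∈ ((Walk.cons h q).takeUntil w hws).edges := by
          rw [heq]; simp
        have hedge' : s(x, w) ∈ (Walk.cons h q).edges :=
          (Walk.edges_takeUntil_subset _ hws) hedge
        simp only [Walk.edges_cons, List.mem_cons] at hedge'
        rcases hedge' with hxy | hxy
        · rw [Sym2.congr_right] at hxy
          exact hwb hxy
        · exact hxq (q.fst_mem_support_of_mem_edges hxy)
      have hp' : (Walk.cons hw.symm (Walk.cons h q)).IsPath :=
        (Walk.cons_isPath_iff _ _).mpr ⟨hp, hws⟩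
      refine ih w (Walk.cons hw.symm (Walk.cons h q)) hp' ?_ ?_
      · simp only [Walk.support_cons, List.mem_cons]
        rintro (rfl | hzz)
        · exact hwv rfl
        · exact hv (by simpa using hzz)
      · have := hp'.length_lt
        simp only [Walk.length_cons] at *
        omega

lemma leaves_isMEGSet [Fintype V] (hT : G.IsTree) : IsMEGSet G (leaves G) := by
  classical
  intro e he
  induction e with
  | h u v =>
    rw [mem_edgeSet] at he
    obtain ⟨x, hx, px, hpx, hvpx⟩ := exists_leaf_path hT he
    obtain ⟨y, hy, py, hpy, hupy⟩ := exists_leaf_path hT he.symm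
    refine ⟨x, hx, y, hy, monitors_of hT (px.append (Walk.cons he py.reverse)) ?_ ?_⟩
    · refine append_isPath hpx ?_ ?_
      · rw [Walk.cons_isPath_iff]
        refine ⟨hpy.reverse, ?_⟩
        rw [Walk.support_reverse, List.mem_reverse]
        exact hupy
      · intro z hz1 hz2
        simp only [Walk.support_cons, List.mem_cons] at hz2
        rcases hz2 with rfl | hz2
        · rfl
        rw [Walk.support_reverse, List.mem_reverse] at hz2
        exfalso
        -- z is in both px.support and py.support : contradiction
        have hA : ((px.dropUntil z hz1).append (Walk.cons he Walk.nil)).IsPath := by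
          refine append_isPath (hpx.dropUntil hz1) (by simp [he.ne]) ?_
          intro z' hz1' hz2'
          simp only [Walk.support_cons, Walk.support_nil, List.mem_cons,
            List.mem_singleton] at hz2'
          rcases hz2' with rfl | rfl | hz2'
          · rfl
          · exact absurd ((px.support_dropUntil_subset hz1) hz1') hvpx
          · simp at hz2'
        have hB : (py.dropUntil z hz2).IsPath := hpy.dropUntil hz2
        have heq := path_unique hT hA hB
        have huA : u ∈ ((px.dropUntil z hz1).append (Walk.cons he Walk.nil)).support := by
          rw [Walk.mem_support_append_iff]
          exact Or.inl (px.dropUntil z hz1).end_mem_support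
        rw [heq] at huA
        exact hupy ((py.support_dropUntil_subset hz2) huA)
    · rw [Walk.edges_append]
      simp

lemma leaves_subset [Fintype V] (hT : G.IsTree) {S : Set V} (hS : IsMEGSet G S) :
    leaves G ⊆ S := by
  classical
  intro v hv
  obtain ⟨u, hu⟩ : ∃ u, G.neighborSet v = {u} := Set.ncard_eq_one.mp hv
  have huv : G.Adj v u := by
    have : u ∈ G.neighborSet v := by rw [hu]; rfl
    exact this
  have he : s(v, u) ∈ G.edgeSet := huv
  obtain ⟨x, hx, y, hy, ⟨⟨p, hp, hl⟩, hall⟩⟩ := hS _ he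
  have hep : s(v, u) ∈ p.edges := hall p hp hl
  have hvs : v ∈ p.support := p.fst_mem_support_of_mem_edges hep
  by_cases hvx : v = x
  · exact hvx ▸ hx
  by_cases hvy : v = y
  · exact hvy ▸ hy
  exfalso
  -- the edge s(v,u) appears both before and after v in p, contradicting trail-ness
  have nbr_eq : ∀ {b : V}, G.Adj v b → b = u := by
    intro b hb
    have : b ∈ G.neighborSet v := hb
    rwa [hu] at this
  have htu : s(v, u) ∈ (p.takeUntil v hvs).edges := by
    obtain ⟨b, hb, t', ht'⟩ :=
      Walk.exists_eq_cons_of_ne hvx (p.takeUntil v hvs).reverse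
    have hbu : b = u := nbr_eq hb
    have : s(v, b) ∈ (p.takeUntil v hvs).reverse.edges := by
      rw [ht']; simp
    rw [Walk.edges_reverse, List.mem_reverse] at this
    rwa [hbu] at this
  have hdu : s(v, u) ∈ (p.dropUntil v hvs).edges := by
    obtain ⟨b, hb, d', hd'⟩ := Walk.exists_eq_cons_of_ne hvy (p.dropUntil v hvs)
    have hbu : b = u := nbr_eq hb
    subst hbu
    rw [hd']
    simp
  have hnodup : ((p.takeUntil v hvs).append (p.dropUntil v hvs)).edges.Nodup := by
    rw [p.take_spec hvs]
    exact hp.isTrail.edges_nodup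
  rw [Walk.edges_append, List.nodup_append] at hnodup
  exact hnodup.2.2 _ htu _ hdu rfl

end MEGAux


theorem tree_leaves_unique_min_MEG {V : Type*} [Fintype V] (G : SimpleGraph V)
    (hT : G.IsTree) (hE : G.edgeSet.Nonempty) :
    IsMEGSet G (leaves G) ∧ (∀ S : Set V, IsMEGSet G S → leaves G ⊆ S) ∧
      megNum G = (leaves G).ncard := by
  have h1 : IsMEGSet G (leaves G) := MEGAux.leaves_isMEGSet hT
  have h2 : ∀ S : Set V, IsMEGSet G S → leaves G ⊆ S := fun S hS => MEGAux.leaves_subset hT hS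
  refine ⟨h1, h2, le_antisymm (Nat.sInf_le ⟨leaves G, h1, rfl⟩) ?_⟩
  have hne : {n | ∃ S : Set V, IsMEGSet G S ∧ S.ncard = n}.Nonempty := ⟨_, leaves G, h1, rfl⟩
  obtain ⟨S, hS, hcard⟩ := Nat.sInf_mem hne
  show (leaves G).ncard ≤ megNum G
  rw [show megNum G = S.ncard from hcard.symm]
  exact Set.ncard_le_ncard (h2 S hS) (Set.toFinite S)
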